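/- Let (A, μ, α) be a hom-associative algebra over a field k and define the commutator bracket [a,b] := μ(a,b) − μ(b,a). Then (A, [−,−], α) is a hom-Lie algebra: the bracket is bilinear and skew-symmetric, α([a,b]) = [α(a), α(b)], and the hom-Jacobi identity [[a,b], α(c)] + [[b,c], α(a)] + [[c,a], α(b)] = 0 holds for all a, b, c ∈ A. -/
import Mathlib


/-- The commutator bracket `[a,b] := μ(a,b) − μ(b,a)` of a bilinear multiplication. -/
def commBr {k A : Type*} [Field k] [AddCommGroup A] [Module k A]
    (μ : A →ₗ[k] A →ₗ[k] A) (a b : A) : A :=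
  μ a b - μ b a

/-- Let `(A, μ, α)` be a hom-associative algebra over a field `k` and define
`[a,b] := μ(a,b) − μ(b,a)`.  Then `(A, [−,−], α)` is a hom-Lie algebra: the bracket is
bilinear and skew-symmetric, `α([a,b]) = [α(a), α(b)]`, and the hom-Jacobi identity
`[[a,b], α(c)] + [[b,c], α(a)] + [[c,a], α(b)] = 0` holds. -/
theorem hom_associative_commutator_hom_lie
    {k A : Type*} [Field k] [AddCommGroup A] [Module k A]
    (μ : A →ₗ[k] A →ₗ[k] A) (αA : A →ₗ[k] A)
    (hαμ : ∀ a b, αA (μ a b) = μ (αA a) (αA b))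
    (hassoc : ∀ a b c, μ (αA a) (μ b c) = μ (μ a b) (αA c)) :
    (∀ a a' b, commBr μ (a + a') b = commBr μ a b + commBr μ a' b)
      ∧ (∀ (t : k) (a b : A), commBr μ (t • a) b = t • commBr μ a b)
      ∧ (∀ a b b', commBr μ a (b + b') = commBr μ a b + commBr μ a b')
      ∧ (∀ (t : k) (a b : A), commBr μ a (t • b) = t • commBr μ a b)
      ∧ (∀ a b, commBr μ a b = -commBr μ b a)
      ∧ (∀ a b, αA (commBr μ a b) = commBr μ (αA a) (αA b))
      ∧ (∀ a b c,
          commBr μ (commBr μ a b) (αA c)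
            + commBr μ (commBr μ b c) (αA a)
            + commBr μ (commBr μ c a) (αA b) = 0) := by
  refine ⟨?_, ?_, ?_, ?_, ?_, ?_, ?_⟩ <;>
    intros <;> simp only [commBr, map_add, map_smul, map_sub, LinearMap.add_apply,
      LinearMap.smul_apply, LinearMap.sub_apply, hαμ]
  · abel
  · rw [smul_sub]
  · abel
  · rw [smul_sub]
  · abel
  · simp only [hassoc, map_sub, map_add, LinearMap.sub_apply, LinearMap.add_apply]
    abel
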